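/- Let K be a field of characteristic ≠ 2 and V a K-vector space with finrank V = n ≥ 2. The subalgebra of the exterior algebra of V generated by all commutators [a, b] = a*b - b*a (a, b ∈ ⋀ V) equals the even part A_even = ⨁_i ⋀^{2i} V. -/

import Mathlib

section Aux

open ExteriorAlgebra

variable {K : Type*} [Field K] {V : Type*} [AddCommGroup V] [Module K V]

lemma aux_iota_supercomm (v : V) {j : ℕ} {y : ExteriorAlgebra K V} (hy : y ∈ ⋀[K]^j V) :
    ι K v * y = ((-1 : K) ^ j) • (y * ι K v) := by
  refine Submodule.pow_induction_on_left'
    (M := LinearMap.range (ι K : V →ₗ[K] ExteriorAlgebra K V))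
    (C := fun n z _ => ι K v * z = ((-1 : K) ^ n) • (z * ι K v)) ?_ ?_ ?_ hy
  · intro r
    simp [Algebra.commutes]
  · intro x y i hx hy ihx ihy
    rw [mul_add, ihx, ihy, add_mul, smul_add]
  · rintro m ⟨w, rfl⟩ i x hx ih
    have h1 : ι K v * ι K w = -(ι K w * ι K v) :=
      eq_neg_of_add_eq_zero_left (ι_add_mul_swap v w)
    calc ι K v * (ι K w * x) = (ι K v * ι K w) * x := by rw [mul_assoc]
      _ = -(ι K w * (ι K v * x)) := by rw [h1, neg_mul, mul_assoc]
      _ = -(ι K w * (((-1 : K) ^ i) • (x * ι K v))) := by rw [ih]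
      _ = ((-1 : K) ^ (i + 1)) • (ι K w * x * ι K v) := by
          rw [mul_smul_comm, ← neg_smul, pow_succ, mul_comm ((-1 : K) ^ i), neg_one_mul,
            mul_assoc]

lemma aux_supercomm {i j : ℕ} {x y : ExteriorAlgebra K V} (hx : x ∈ ⋀[K]^i V)
    (hy : y ∈ ⋀[K]^j V) : x * y = ((-1 : K) ^ (i * j)) • (y * x) := by
  refine Submodule.pow_induction_on_left'
    (M := LinearMap.range (ι K : V →ₗ[K] ExteriorAlgebra K V))
    (C := fun n z _ => z * y = ((-1 : K) ^ (n * j)) • (y * z)) ?_ ?_ ?_ hx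
  · intro r
    simp [Algebra.commutes]
  · intro a b i ha hb iha ihb
    rw [add_mul, iha, ihb, mul_add, smul_add]
  · rintro m ⟨v, rfl⟩ i a ha ih
    calc (ι K v * a) * y = ι K v * (a * y) := by rw [mul_assoc]
      _ = ((-1 : K) ^ (i * j)) • (ι K v * (y * a)) := by rw [ih, mul_smul_comm]
      _ = ((-1 : K) ^ (i * j)) • ((((-1 : K) ^ j) • (y * ι K v)) * a) := by
          rw [← mul_assoc, aux_iota_supercomm v hy]
      _ = (((-1 : K) ^ (i * j)) * ((-1 : K) ^ j)) • (y * (ι K v * a)) := by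
          rw [smul_mul_assoc, smul_smul, mul_assoc]
      _ = ((-1 : K) ^ ((i + 1) * j)) • (y * (ι K v * a)) := by
          rw [← pow_add]
          congr 1
          ring

lemma aux_comm_mem_even {i j : ℕ} {x y : ExteriorAlgebra K V} (hx : x ∈ ⋀[K]^i V)
    (hy : y ∈ ⋀[K]^j V) : x * y - y * x ∈ ⨆ k : ℕ, ⋀[K]^(2 * k) V := by
  rcases Nat.even_or_odd (i * j) with he | ho
  · rw [aux_supercomm hx hy, he.neg_one_pow, one_smul, sub_self]
    exact zero_mem _
  · have hi : Odd i := (Nat.odd_mul.mp ho).1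
    have hj : Odd j := (Nat.odd_mul.mp ho).2
    obtain ⟨k, hk⟩ := hi.add_odd hj
    have h1 : x * y ∈ ⋀[K]^(i + j) V := by
      rw [exteriorPower, pow_add]; exact Submodule.mul_mem_mul hx hy
    have h2 : y * x ∈ ⋀[K]^(i + j) V := by
      rw [exteriorPower, add_comm, pow_add]; exact Submodule.mul_mem_mul hy hx
    refine Submodule.mem_iSup_of_mem k ?_
    have h2k : 2 * k = i + j := by omega
    rw [h2k]
    exact sub_mem h1 h2

lemma aux_even_mul_mem {a b : ExteriorAlgebra K V}
    (ha : a ∈ ⨆ k : ℕ, ⋀[K]^(2 * k) V) (hb : b ∈ ⨆ k : ℕ, ⋀[K]^(2 * k) V) :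
    a * b ∈ ⨆ k : ℕ, ⋀[K]^(2 * k) V := by
  refine Submodule.iSup_induction' (fun k : ℕ => ⋀[K]^(2 * k) V)
    (motive := fun a _ => a * b ∈ ⨆ k : ℕ, ⋀[K]^(2 * k) V)
    ?_ (by simp) (fun x y _ _ hx hy => by
      show (x + y) * b ∈ ⨆ k : ℕ, ⋀[K]^(2 * k) V
      rw [add_mul]; exact add_mem hx hy) ha
  intro i x hx
  refine Submodule.iSup_induction' (fun k : ℕ => ⋀[K]^(2 * k) V)
    (motive := fun b _ => x * b ∈ ⨆ k : ℕ, ⋀[K]^(2 * k) V)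
    ?_ (by simp) (fun u v _ _ hu hv => by
      show x * (u + v) ∈ ⨆ k : ℕ, ⋀[K]^(2 * k) V
      rw [mul_add]; exact add_mem hu hv) hb
  intro j y hy
  refine Submodule.mem_iSup_of_mem (i + j) ?_
  have h : (2 : ℕ) * (i + j) = 2 * i + 2 * j := by ring
  rw [h, exteriorPower, pow_add]
  exact Submodule.mul_mem_mul hx hy

/-- The even part as a subalgebra. -/
noncomputable def evenSubalgebra (K : Type*) [Field K] (V : Type*) [AddCommGroup V]
    [Module K V] : Subalgebra K (ExteriorAlgebra K V) :=
  (⨆ k : ℕ, ⋀[K]^(2 * k) V).toSubalgebra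
    (Submodule.mem_iSup_of_mem 0 (by
      rw [mul_zero, exteriorPower, pow_zero]
      exact Submodule.mem_one.mpr ⟨1, map_one _⟩))
    (fun _ _ => aux_even_mul_mem)

end Aux

/-- For `char K ≠ 2` and `finrank V = n ≥ 2`, the subalgebra of the exterior algebra
generated by all commutators `a*b - b*a` equals the even part `⨁ᵢ ⋀^(2i) V`. -/
theorem commutator_subalgebra_eq_even_part {K : Type*} [Field K] {V : Type*} [AddCommGroup V]
    [Module K V] [FiniteDimensional K V] (hchar : ringChar K ≠ 2) {n : ℕ}
    (hn : Module.finrank K V = n) (hn2 : 2 ≤ n) :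
    Subalgebra.toSubmodule
        (Algebra.adjoin K {x : ExteriorAlgebra K V | ∃ a b, x = a * b - b * a}) =
      ⨆ i : ℕ, ⋀[K]^(2 * i) V := by
  classical
  set Adj := Algebra.adjoin K {x : ExteriorAlgebra K V | ∃ a b, x = a * b - b * a} with hAdj
  apply le_antisymm
  · -- adjoin ≤ even part
    have hle : Adj ≤ evenSubalgebra K V := by
      apply Algebra.adjoin_le
      rintro x ⟨a, b, rfl⟩
      set 𝒜 : ℕ → Submodule K (ExteriorAlgebra K V) := fun i => ⋀[K]^i V with h𝒜
      have key : ∀ (j : ℕ) (y : ExteriorAlgebra K V), y ∈ ⋀[K]^j V →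
          ∀ a : ExteriorAlgebra K V, a * y - y * a ∈ ⨆ k : ℕ, ⋀[K]^(2 * k) V := by
        intro j y hy a
        refine DirectSum.Decomposition.inductionOn 𝒜
          (motive := fun a => a * y - y * a ∈ ⨆ k : ℕ, ⋀[K]^(2 * k) V) (by simp) ?_ ?_ a
        · rintro i ⟨m, hm⟩
          exact aux_comm_mem_even hm hy
        · intro m m' h1 h2
          have h : (m + m') * y - y * (m + m') = (m * y - y * m) + (m' * y - y * m') := by
            noncomm_ring
          rw [h]
          exact add_mem h1 h2
      show a * b - b * a ∈ ⨆ k : ℕ, ⋀[K]^(2 * k) V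
      refine DirectSum.Decomposition.inductionOn 𝒜
        (motive := fun b => a * b - b * a ∈ ⨆ k : ℕ, ⋀[K]^(2 * k) V) (by simp) ?_ ?_ b
      · rintro j ⟨m, hm⟩
        exact key j m hm a
      · intro m m' h1 h2
        have h : a * (m + m') - (m + m') * a = (a * m - m * a) + (a * m' - m' * a) := by
          noncomm_ring
        rw [h]
        exact add_mem h1 h2
    exact hle
  · -- even part ≤ adjoin
    have h2 : (2 : K) ≠ 0 := Ring.two_ne_zero hchar
    have hS2 : ⋀[K]^2 V ≤ Subalgebra.toSubmodule Adj := by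
      rw [ExteriorAlgebra.exteriorPower, pow_two]
      refine Submodule.mul_le.mpr ?_
      rintro _ ⟨v, rfl⟩ _ ⟨w, rfl⟩
      have hsw : ExteriorAlgebra.ι K w * ExteriorAlgebra.ι K v =
          -(ExteriorAlgebra.ι K v * ExteriorAlgebra.ι K w) :=
        eq_neg_of_add_eq_zero_right (ExteriorAlgebra.ι_add_mul_swap v w)
      have key : ExteriorAlgebra.ι K v * ExteriorAlgebra.ι K w =
          (2 : K)⁻¹ • (ExteriorAlgebra.ι K v * ExteriorAlgebra.ι K w -
            ExteriorAlgebra.ι K w * ExteriorAlgebra.ι K v) := by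
        rw [hsw, sub_neg_eq_add, ← two_smul K, smul_smul, inv_mul_cancel₀ h2, one_smul]
      rw [key]
      exact Submodule.smul_mem _ _ <| Algebra.subset_adjoin ⟨_, _, rfl⟩
    refine iSup_le fun k => ?_
    induction k with
    | zero =>
      rintro x hx
      rw [mul_zero, ExteriorAlgebra.exteriorPower, pow_zero] at hx
      obtain ⟨r, rfl⟩ := Submodule.mem_one.mp hx
      exact Subalgebra.algebraMap_mem Adj r
    | succ k ih =>
      have h : (2 : ℕ) * (k + 1) = 2 + 2 * k := by ring
      rw [h, ExteriorAlgebra.exteriorPower, pow_add]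
      refine Submodule.mul_le.mpr fun x hx y hy => ?_
      exact Subalgebra.mul_mem Adj (hS2 hx) (ih hy)
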